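/- Let A be a left R-module with projective presentation σ_A: P₁ → P₀ and B a left S-module with projective presentation σ_B: Q₁ → Q₀, and let σ be the induced projective presentation of (0,B) ⊕ (A,FA) in the comma category (F, S-Mod). Then an object (M,N)_h of (F, S-Mod) belongs to D_σ if and only if M belongs to D_{σ_A} and N belongs to D_{σ_B}. -/

import Mathlib

open CategoryTheory CategoryTheory.Limits

universe v u

section Generic

variable {𝒜 : Type*} [Category.{v} 𝒜]

/-- For a morphism `σ : P₁ ⟶ P₀`, the class `D_σ` of objects `X` such that
`Hom(σ, X)` is surjective. -/
def Dclass {P₁ P₀ : 𝒜} (σ : P₁ ⟶ P₀) : Set 𝒜 :=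
  {X | ∀ g : P₁ ⟶ X, ∃ h : P₀ ⟶ X, σ ≫ h = g}

/-- `Gen T` is the class of objects admitting an epimorphism from a coproduct (direct sum)
of copies of `T`. -/
def Gen (T : 𝒜) : Set 𝒜 :=
  {X | ∃ (ι : Type v) (c : Cofan (fun _ : ι => T)) (_ : IsColimit c) (f : c.pt ⟶ X), Epi f}

variable [HasZeroMorphisms 𝒜]

/-- A projective presentation `P₁ → P₀ → T → 0` of an object `T`. -/
structure ProjPres (T : 𝒜) where
  P₁ : 𝒜
  P₀ : 𝒜
  σ : P₁ ⟶ P₀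
  π : P₀ ⟶ T
  projective₁ : Projective P₁
  projective₀ : Projective P₀
  epi : Epi π
  w : σ ≫ π = 0
  exact : (ShortComplex.mk σ π w).Exact

/-- A class of objects is a torsion class if it is closed under (epimorphic) images,
direct sums (coproducts) and extensions. -/
def IsTorsionClass (𝒞 : Set 𝒜) : Prop :=
  (∀ ⦃X Y : 𝒜⦄ (f : X ⟶ Y), Epi f → X ∈ 𝒞 → Y ∈ 𝒞) ∧
  (∀ (ι : Type v) (Xs : ι → 𝒜) (c : Cofan Xs), IsColimit c → (∀ i, Xs i ∈ 𝒞) → c.pt ∈ 𝒞) ∧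
  (∀ (E : ShortComplex 𝒜), E.ShortExact → E.X₁ ∈ 𝒞 → E.X₃ ∈ 𝒞 → E.X₂ ∈ 𝒞)

/-- `T` is a silting object (with respect to some projective presentation) if it admits a
projective presentation `σ` with `D_σ = Gen T`. -/
def IsSilting (T : 𝒜) : Prop :=
  ∃ p : ProjPres T, Dclass p.σ = Gen T

/-- `T` is a partial silting object if it admits a projective presentation `σ` such that
`D_σ` is a torsion class and `T ∈ D_σ`. -/
def IsPartialSilting (T : 𝒜) : Prop :=
  ∃ p : ProjPres T, IsTorsionClass (Dclass p.σ) ∧ T ∈ Dclass p.σ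

end Generic

section CommaZero

variable {𝒜 : Type*} [Category 𝒜] {ℬ : Type*} [Category ℬ]
  [Preadditive 𝒜] [Preadditive ℬ] (F : 𝒜 ⥤ ℬ) [F.Additive]

instance : HasZeroMorphisms (Comma F (𝟭 ℬ)) where
  zero X Y := ⟨{ left := 0, right := 0, w := by simp }⟩
  comp_zero {X Y} f Z := by
    apply CommaMorphism.ext
    · show f.left ≫ 0 = 0
      simp
    · show f.right ≫ 0 = 0
      simp
  zero_comp X {Y Z} f := by
    apply CommaMorphism.ext
    · show 0 ≫ f.left = 0
      simp
    · show 0 ≫ f.right = 0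
      simp

end CommaZero

section ModComma

variable {R S : Type u} [Ring R] [Ring S]
  (F : ModuleCat.{u} R ⥤ ModuleCat.{u} S) [F.Additive]

/-- The object `(P, FP ⊕ Q)` of the comma category `(F, S-Mod)`, with structure map
`(1,0) : FP ⟶ FP ⊕ Q`; it is isomorphic to `(P, FP) ⊕ (0, Q)`. -/
def pairObj (P : ModuleCat.{u} R) (Q : ModuleCat.{u} S) :
    Comma F (𝟭 (ModuleCat.{u} S)) where
  left := P
  right := ModuleCat.of S (F.obj P × Q)
  hom := ModuleCat.ofHom (LinearMap.inl S (F.obj P) Q)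

/-- The morphism `(a, Fa ⊕ b) : (P₁, FP₁ ⊕ Q₁) ⟶ (P₀, FP₀ ⊕ Q₀)` in the comma
category `(F, S-Mod)`.  When `a = σ_A`, `b = σ_B` are projective presentations of `A` and
`B`, this is the induced projective presentation `σ` of `(0,B) ⊕ (A, FA)`. -/
def pairMap {P₁ P₀ : ModuleCat.{u} R} {Q₁ Q₀ : ModuleCat.{u} S}
    (a : P₁ ⟶ P₀) (b : Q₁ ⟶ Q₀) : pairObj F P₁ Q₁ ⟶ pairObj F P₀ Q₀ where
  left := a
  right := ModuleCat.ofHom (LinearMap.prodMap (F.map a).hom b.hom)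
  w := by
    apply ModuleCat.hom_ext
    apply LinearMap.ext
    intro x
    show (LinearMap.inl S (F.obj P₀) Q₀) ((F.map a).hom x)
        = (LinearMap.prodMap (F.map a).hom b.hom) (LinearMap.inl S (F.obj P₁) Q₁ x)
    simp

/-- The object `(M, 0)` of the comma category. -/
def leftObj (M : ModuleCat.{u} R) : Comma F (𝟭 (ModuleCat.{u} S)) where
  left := M
  right := ModuleCat.of S PUnit
  hom := 0

/-- The object `(0, N)` of the comma category. -/
def rightObj (N : ModuleCat.{u} S) : Comma F (𝟭 (ModuleCat.{u} S)) where
  left := ModuleCat.of R PUnit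
  right := N
  hom := 0

/-- The object `(M, FM)` of the comma category, with the identity structure map. -/
def diagObj (M : ModuleCat.{u} R) : Comma F (𝟭 (ModuleCat.{u} S)) where
  left := M
  right := F.obj M
  hom := 𝟙 (F.obj M)

end ModComma

/-- Lemma: characterization of `D_σ` in the comma category.
Let `A` be a left `R`-module with projective presentation `σ_A : P₁ ⟶ P₀` and `B` a left
`S`-module with projective presentation `σ_B : Q₁ ⟶ Q₀`, and let `σ` be the induced projective
presentation of `(0,B) ⊕ (A,FA)` in the comma category `(F, S-Mod)`.  Then an object `(M,N)_h`
of `(F, S-Mod)` belongs to `D_σ` if and only if `M ∈ D_{σ_A}` and `N ∈ D_{σ_B}`. -/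
theorem dclass_comma_iff {R S : Type u} [Ring R] [Ring S]
    (F : ModuleCat.{u} R ⥤ ModuleCat.{u} S) [F.Additive] [PreservesFiniteColimits F]
    {A : ModuleCat.{u} R} {B : ModuleCat.{u} S}
    (pA : ProjPres A) (pB : ProjPres B)
    (X : Comma F (𝟭 (ModuleCat.{u} S))) :
    X ∈ Dclass (pairMap F pA.σ pB.σ) ↔ X.left ∈ Dclass pA.σ ∧ X.right ∈ Dclass pB.σ := by
  constructor
  · intro hX
    constructor
    · intro g
      obtain ⟨h, hh⟩ := hX
        { left := g
          right := ModuleCat.ofHom ((X.hom.hom.comp (F.map g).hom).comp (LinearMap.fst S (F.obj pA.P₁) pB.P₁))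
          w := by
            apply ModuleCat.hom_ext
            apply LinearMap.ext
            intro x
            rfl }
      refine ⟨h.left, ?_⟩
      have := congrArg CommaMorphism.left hh
      exact this
    · intro g
      obtain ⟨h, hh⟩ := hX
        { left := 0
          right := ModuleCat.ofHom (g.hom.comp (LinearMap.snd S (F.obj pA.P₁) pB.P₁))
          w := by
            apply ModuleCat.hom_ext
            apply LinearMap.ext
            intro x
            have h0 : F.map (0 : pA.P₁ ⟶ X.left) = 0 := F.map_zero _ _
            show X.hom.hom ((F.map (0 : pA.P₁ ⟶ X.left)).hom x) = g.hom 0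
            rw [h0]
            show X.hom.hom (0 : F.obj X.left) = g.hom 0
            simp }
      have hr := congrArg CommaMorphism.right hh
      refine ⟨ModuleCat.ofHom (LinearMap.inr S (F.obj pA.P₀) pB.P₀) ≫ h.right, ?_⟩
      apply ModuleCat.hom_ext
      apply LinearMap.ext
      intro q
      have h2 := congrArg (fun f => f.hom ((0 : F.obj pA.P₁), q)) hr
      have lhs : ((pairMap F pA.σ pB.σ ≫ h).right).hom ((0 : F.obj pA.P₁), q)
          = h.right.hom ((F.map pA.σ).hom 0, pB.σ.hom q) := rfl
      simp only at h2
      rw [lhs, map_zero (F.map pA.σ).hom] at h2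
      exact h2
  · rintro ⟨hM, hN⟩ g
    obtain ⟨α₀, hα⟩ := hM g.left
    obtain ⟨γ, hγ⟩ := hN (ModuleCat.ofHom (LinearMap.inr S (F.obj pA.P₁) pB.P₁) ≫ g.right)
    refine ⟨{ left := α₀
              right := ModuleCat.ofHom (LinearMap.coprod (X.hom.hom.comp (F.map α₀).hom) γ.hom)
              w := by
                apply ModuleCat.hom_ext
                refine LinearMap.ext fun x => ?_
                have h1 : (LinearMap.coprod (X.hom.hom.comp (F.map α₀).hom) γ.hom)
                    ((LinearMap.inl S (F.obj pA.P₀) pB.P₀) x) = X.hom.hom ((F.map α₀).hom x) := by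
                  simp
                  rfl
                exact h1.symm }, ?_⟩
    apply CommaMorphism.ext
    · exact hα
    · apply ModuleCat.hom_ext
      refine LinearMap.ext fun p => ?_
      obtain ⟨x, q⟩ := p
      have hwx := congrArg (fun f => f.hom x) g.w
      have e1 : X.hom.hom ((F.map g.left).hom x) = g.right.hom ((x, 0) : F.obj pA.P₁ × pB.P₁) := hwx
      have e2 : γ.hom (pB.σ.hom q) = g.right.hom ((0, q) : F.obj pA.P₁ × pB.P₁) :=
        congrArg (fun f => f.hom q) hγ
      have hFax : (F.map α₀).hom ((F.map pA.σ).hom x) = (F.map g.left).hom x := by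
        have hFa : F.map pA.σ ≫ F.map α₀ = F.map g.left := by
          rw [← F.map_comp, hα]
          rfl
        exact congrArg (fun f => f.hom x) hFa
      have hdec : g.right.hom ((x, q) : F.obj pA.P₁ × pB.P₁)
          = g.right.hom ((x, 0) : F.obj pA.P₁ × pB.P₁) + g.right.hom ((0, q) : F.obj pA.P₁ × pB.P₁) := by
        have hsum : ((x, 0) : F.obj pA.P₁ × pB.P₁) + ((0, q) : F.obj pA.P₁ × pB.P₁) = (x, q) := by
          rw [Prod.mk_add_mk, add_zero, zero_add]
        rw [← hsum]
        exact map_add g.right.hom _ _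
      have key : (LinearMap.coprod (X.hom.hom.comp (F.map α₀).hom) γ.hom)
          ((LinearMap.prodMap (F.map pA.σ).hom pB.σ.hom) ((x, q) : F.obj pA.P₁ × pB.P₁))
          = g.right.hom ((x, q) : F.obj pA.P₁ × pB.P₁) := by
        simp only [LinearMap.prodMap_apply, LinearMap.coprod_apply, LinearMap.comp_apply]
        rw [hFax, e1, hdec]
        exact congrArg (g.right.hom ((x, 0) : F.obj pA.P₁ × pB.P₁) + ·) e2
      exact key
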